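/- Let S be a finite abelian 2-group and F a saturated fusion system on S. Then B(F)^× = B(S)^× if and only if F = F_S(S), the trivial fusion system on S (the fusion system whose morphisms are exactly those induced by conjugation in S, i.e. all inclusions since S is abelian). -/

import Mathlib

namespace BurnsideFusion

/-! ### The Burnside ring, realized via marks inside the ghost ring -/

/-- The vector of marks of the transitive `G`-set `G/K`:
its value at `H ≤ G` is the number of `H`-fixed points of `G/K`. -/
noncomputable def markVector (G : Type*) [Group G] (K : Subgroup G) : Subgroup G → ℤ :=
  fun H => (Nat.card {x : G ⧸ K // ∀ h : G, h ∈ H → h • x = x} : ℤ)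

/-- The Burnside ring of `G`, realized (faithfully, via the injective mark homomorphism)
as the subring of the ghost ring `∏_{H ≤ G} ℤ` generated by the marks of the
transitive `G`-sets `G/K`.  The mark of an element `a` at `H` is just `a H`. -/
noncomputable def burnsideRing (G : Type*) [Group G] : Subring (Subgroup G → ℤ) :=
  Subring.closure (Set.range (markVector G))

/-- The unit group `B(G)^×` of the Burnside ring, as a set:
since every unit of `B(G)` has all marks `±1`, the units are exactly the
elements squaring to `1`. -/
def burnsideUnits (G : Type*) [Group G] : Set (Subgroup G → ℤ) :=
  {b | b ∈ burnsideRing G ∧ b * b = 1}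

/-- Restriction `B(G) → B(S)` for `S ≤ G`, on marks:
`(n_H)_{H ≤ G} ↦ (n_P)_{P ≤ S}`. -/
def resMark {G : Type*} [Group G] (S : Subgroup G) (b : Subgroup G → ℤ) :
    Subgroup ↥S → ℤ :=
  fun P => b (P.map S.subtype)

/-- The action of a (bijective) endomorphism `f` of `G` on the ghost ring, on marks:
`(f · b)_Q = b_{f⁻¹(Q)}`. -/
def autAct {G : Type*} [Group G] (f : G →* G) (b : Subgroup G → ℤ) : Subgroup G → ℤ :=
  fun Q => b (Q.comap f)

/-- The elements of the Burnside ring fixed by a set `A` of automorphisms of `G`.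
(For `A = Aut_F(P)` this is `B(P)^{Out_F(P)}`, since the inner automorphisms
act trivially on `B(P)`.) -/
def fixedBurnside (G : Type*) [Group G] (A : Set (MulAut G)) : Set (Subgroup G → ℤ) :=
  {b | b ∈ burnsideRing G ∧ ∀ α ∈ A, autAct α.toMonoidHom b = b}

/-- The units of the Burnside ring fixed by a set `A` of automorphisms of `G`. -/
def fixedUnits (G : Type*) [Group G] (A : Set (MulAut G)) : Set (Subgroup G → ℤ) :=
  {b | b ∈ burnsideUnits G ∧ ∀ α ∈ A, autAct α.toMonoidHom b = b}

/-- The relative trace map `tr^Γ_Δ` on the (units of the) Burnside ring: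
the product of `α · b` over a set of representatives `α` of the cosets `Γ/Δ`. -/
noncomputable def relTrace {G : Type*} [Group G] (Γ Δ : Subgroup (MulAut G))
    (b : Subgroup G → ℤ) : Subgroup G → ℤ :=
  ∏ᶠ c : ↥Γ ⧸ Δ.subgroupOf Γ, autAct ((Quotient.out c : ↥Γ) : MulAut G).toMonoidHom b

/-! ### Fusion systems -/

/-- The homomorphism `P → Q` induced by conjugation by `s`. -/
def conjMap {S : Type*} [Group S] (s : S) (P Q : Subgroup S)
    (h : ∀ x ∈ P, s * x * s⁻¹ ∈ Q) : ↥P →* ↥Q where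
  toFun x := ⟨s * ↑x * s⁻¹, h x x.2⟩
  map_one' := by ext; simp
  map_mul' x y := by ext; simp

/-- A fusion system `F` on a group `S`: a category whose objects are the subgroups
of `S` and whose morphisms are injective group homomorphisms, containing all the
homomorphisms induced by conjugation in `S`, and such that every morphism factors
as an isomorphism in `F` followed by an inclusion. -/
structure FusionSystem (S : Type*) [Group S] where
  /-- The set of `F`-morphisms `P → Q`. -/
  Hom : ∀ P Q : Subgroup S, Set (↥P →* ↥Q)
  /-- All morphisms are injective. -/
  inj : ∀ {P Q : Subgroup S} {f : ↥P →* ↥Q}, f ∈ Hom P Q → Function.Injective f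
  /-- `Hom_S(P,Q) ⊆ Hom_F(P,Q)`. -/
  conj_mem : ∀ (s : S) (P Q : Subgroup S) (h : ∀ x ∈ P, s * x * s⁻¹ ∈ Q),
    conjMap s P Q h ∈ Hom P Q
  /-- Morphisms compose. -/
  comp_mem : ∀ {P Q R : Subgroup S} {f : ↥P →* ↥Q} {g : ↥Q →* ↥R},
    f ∈ Hom P Q → g ∈ Hom Q R → g.comp f ∈ Hom P R
  /-- Every morphism factors as an isomorphism in `F` onto its image followed by an
  inclusion. -/
  factor_mem : ∀ {P Q : Subgroup S} {f : ↥P →* ↥Q}, f ∈ Hom P Q →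
    ∃ (R : Subgroup S) (_ : R ≤ Q) (e : ↥P ≃* ↥R), e.toMonoidHom ∈ Hom P R ∧
      ∀ x : ↥P, ((e x : ↥R) : S) = ((f x : ↥Q) : S)
  /-- Isomorphisms in `F` are invertible in `F`. -/
  isoinv_mem : ∀ {P Q : Subgroup S} (e : ↥P ≃* ↥Q),
    e.toMonoidHom ∈ Hom P Q → e.symm.toMonoidHom ∈ Hom Q P

namespace FusionSystem

variable {S : Type*} [Group S] (F : FusionSystem S)

/-- Two subgroups of `S` are `F`-conjugate (isomorphic in `F`). -/
def SubConj (P Q : Subgroup S) : Prop :=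
  ∃ f ∈ F.Hom P Q, Function.Surjective ⇑f

/-- Two elements of `S` are `F`-conjugate: some `F`-isomorphism `⟨x⟩ → ⟨y⟩` sends
`x` to `y`. -/
def ElemConj (x y : S) : Prop :=
  ∃ f ∈ F.Hom (Subgroup.zpowers x) (Subgroup.zpowers y),
    f ⟨x, Subgroup.mem_zpowers x⟩ = ⟨y, Subgroup.mem_zpowers y⟩

/-- A subgroup `P ≤ S` is strongly closed in `F` if the `F`-conjugacy class of every
element of `P` is contained in `P`. -/
def StronglyClosed (P : Subgroup S) : Prop :=
  ∀ x ∈ P, ∀ y : S, F.ElemConj x y → y ∈ P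

/-- A subgroup `P` is normal in `F`: every morphism `φ ∈ Hom_F(Q,R)` extends to a
morphism `ψ ∈ Hom_F(QP, RP)` with `ψ|_Q = φ` and `ψ(P) = P`. -/
def NormalIn (P : Subgroup S) : Prop :=
  ∀ (Q R : Subgroup S), ∀ φ ∈ F.Hom Q R,
    ∃ ψ ∈ F.Hom (Q ⊔ P) (R ⊔ P),
      (∀ (x : S) (hx : x ∈ Q),
        ((ψ ⟨x, Subgroup.mem_sup_left hx⟩ : ↥(R ⊔ P)) : S) = ((φ ⟨x, hx⟩ : ↥R) : S)) ∧
      (∀ (x : S) (hx : x ∈ P),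
        ((ψ ⟨x, Subgroup.mem_sup_right hx⟩ : ↥(R ⊔ P)) : S) ∈ P) ∧
      (∀ y ∈ P, ∃ (x : S) (hx : x ∈ P),
        ((ψ ⟨x, Subgroup.mem_sup_right hx⟩ : ↥(R ⊔ P)) : S) = y)

/-- `Aut_F(P)`: the group of `F`-automorphisms of `P`. -/
def AutF (P : Subgroup S) : Subgroup (MulAut ↥P) where
  carrier := {α | α.toMonoidHom ∈ F.Hom P P}
  one_mem' := by
    have h : ∀ x ∈ P, (1 : S) * x * (1 : S)⁻¹ ∈ P := fun x hx => by simpa using hx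
    have h1 := F.conj_mem 1 P P h
    have e : conjMap (1 : S) P P h = (1 : MulAut ↥P).toMonoidHom := by
      ext x; simp [conjMap]
    rwa [e] at h1
  mul_mem' := by
    intro α β hα hβ
    have h := F.comp_mem hβ hα
    have e : α.toMonoidHom.comp β.toMonoidHom = (α * β).toMonoidHom := rfl
    rwa [e] at h
  inv_mem' := by
    intro α hα
    exact F.isoinv_mem α hα

end FusionSystem

/-- The conjugation automorphism of `P` induced by an element of its normalizer. -/
def conjAut {S : Type*} [Group S] (P : Subgroup S) (s : ↥(Subgroup.normalizer (P : Set S))) : MulAut ↥P where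
  toFun x := ⟨(s : S) * ↑x * (s : S)⁻¹, (Subgroup.mem_normalizer_iff.mp s.2 ↑x).mp x.2⟩
  invFun x := ⟨(s : S)⁻¹ * ↑x * (s : S), by
    have h := (Subgroup.mem_normalizer_iff.mp ((Subgroup.normalizer (P : Set S)).inv_mem s.2) (↑x : S)).mp x.2
    simpa using h⟩
  left_inv x := by ext; simp; group
  right_inv x := by ext; simp; group
  map_mul' x y := by ext; simp

/-- The homomorphism `N_S(P) → Aut(P)` given by conjugation. -/
def conjAutHom {S : Type*} [Group S] (P : Subgroup S) : ↥(Subgroup.normalizer (P : Set S)) →* MulAut ↥P where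
  toFun := conjAut P
  map_one' := by ext x; simp [conjAut]
  map_mul' s t := by ext x; simp [conjAut]; group

/-- `Aut_S(P)`: the subgroup of `Aut(P)` of automorphisms induced by conjugation in `S`. -/
def AutS {S : Type*} [Group S] (P : Subgroup S) : Subgroup (MulAut ↥P) :=
  (conjAutHom P).range

end BurnsideFusion

namespace BurnsideFusion

variable {S : Type*} [Group S]

/-- The automorphism of `⊤ ≤ S` induced by an automorphism of `S`. -/
def topRestrict (α : MulAut S) : MulAut ↥(⊤ : Subgroup S) :=
  (Subgroup.topEquiv.trans α).trans Subgroup.topEquiv.symm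

theorem topRestrict_one : topRestrict (1 : MulAut S) = 1 := by
  ext x; simp [topRestrict]

theorem topRestrict_mul (α β : MulAut S) :
    topRestrict (α * β) = topRestrict α * topRestrict β := by
  ext x; simp [topRestrict]

theorem topRestrict_inv (α : MulAut S) :
    topRestrict α⁻¹ = (topRestrict α).symm := by
  ext x; simp [topRestrict, MulAut.inv_def]

/-- `Aut_F(S)`, realized as a subgroup of `Aut(S)`. -/
def FusionSystem.AutFS (F : FusionSystem S) : Subgroup (MulAut S) where
  carrier := {α | (topRestrict α).toMonoidHom ∈ F.Hom ⊤ ⊤}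
  one_mem' := by
    have h := (F.AutF ⊤).one_mem
    have h' : (1 : MulAut ↥(⊤ : Subgroup S)).toMonoidHom ∈ F.Hom ⊤ ⊤ := h
    simpa [Set.mem_setOf_eq, topRestrict_one] using h'
  mul_mem' := by
    intro α β hα hβ
    have h := F.comp_mem (hβ : (topRestrict β).toMonoidHom ∈ F.Hom ⊤ ⊤) hα
    have e : (topRestrict α).toMonoidHom.comp (topRestrict β).toMonoidHom
        = (topRestrict (α * β)).toMonoidHom := by
      rw [topRestrict_mul]; rfl
    rw [e] at h; exact h
  inv_mem' := by
    intro α hα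
    have h := F.isoinv_mem (topRestrict α) hα
    simpa [Set.mem_setOf_eq, topRestrict_inv] using h

end BurnsideFusion

namespace BurnsideFusion

variable {S : Type*} [Group S]

namespace FusionSystem

variable (F : FusionSystem S)

/-- `P` is fully normalized in `F`: its normalizer has maximal order in its
`F`-conjugacy class. -/
def FullyNormalized (P : Subgroup S) : Prop :=
  ∀ Q : Subgroup S, F.SubConj P Q → Nat.card ↥(Subgroup.normalizer (Q : Set S)) ≤ Nat.card ↥(Subgroup.normalizer (P : Set S))

/-- `P` is fully centralized in `F`: its centralizer has maximal order in its
`F`-conjugacy class. -/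
def FullyCentralized (P : Subgroup S) : Prop :=
  ∀ Q : Subgroup S, F.SubConj P Q →
    Nat.card ↥(Subgroup.centralizer (Q : Set S)) ≤ Nat.card ↥(Subgroup.centralizer (P : Set S))

/-- `P` is `F`-centric: every `F`-conjugate `Q` of `P` satisfies `C_S(Q) ≤ Q`. -/
def Centric (P : Subgroup S) : Prop :=
  ∀ Q : Subgroup S, F.SubConj P Q → Subgroup.centralizer (Q : Set S) ≤ Q

/-- `P` is fully `F`-automized: `Aut_S(P)` is a Sylow `p`-subgroup of `Aut_F(P)`. -/
def FullyAutomized (p : ℕ) (P : Subgroup S) : Prop :=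
  AutS P ≤ F.AutF P ∧ IsPGroup p ↥((AutS P).subgroupOf (F.AutF P)) ∧
    ¬ p ∣ ((AutS P).subgroupOf (F.AutF P)).index

end FusionSystem

/-- For an `F`-isomorphism `φ : P → Q`, the subset
`N_φ = { g ∈ N_S(P) | φ ∘ c_g ∘ φ⁻¹ ∈ Aut_S(Q) }` of `S`. -/
def NphiSet (P Q : Subgroup S) (φ : ↥P ≃* ↥Q) : Set S :=
  {g | ∃ hg : g ∈ Subgroup.normalizer (P : Set S), ∃ h : S, ∀ (x : S) (hx : x ∈ P),
    ((φ ⟨g * x * g⁻¹, (Subgroup.mem_normalizer_iff.mp hg x).mp hx⟩ : ↥Q) : S)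
      = h * ((φ ⟨x, hx⟩ : ↥Q) : S) * h⁻¹}

namespace FusionSystem

variable (F : FusionSystem S)

/-- `Q` is receptive in `F`: every `F`-isomorphism `φ : P → Q` extends to a morphism
in `F` defined on `N_φ`. -/
def Receptive (Q : Subgroup S) : Prop :=
  ∀ (P : Subgroup S) (φ : ↥P ≃* ↥Q), φ.toMonoidHom ∈ F.Hom P Q →
    ∃ T : Subgroup S, (T : Set S) = NphiSet P Q φ ∧
      ∃ ψ ∈ F.Hom T ⊤, ∀ (x : S) (hx : x ∈ P) (hx' : x ∈ T),
        ((ψ ⟨x, hx'⟩ : ↥(⊤ : Subgroup S)) : S) = ((φ ⟨x, hx⟩ : ↥Q) : S)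

/-- `F` is saturated: every `F`-conjugacy class of subgroups contains a fully
automized, receptive member. -/
def IsSaturated (p : ℕ) : Prop :=
  ∀ P : Subgroup S, ∃ Q : Subgroup S, F.SubConj P Q ∧ F.FullyAutomized p Q ∧ F.Receptive Q

end FusionSystem

theorem innRange_subgroupOf_normal (F : FusionSystem S) (P : Subgroup S) :
    (((MulAut.conj : ↥P →* MulAut ↥P).range).subgroupOf (F.AutF P)).Normal := by
  have h : ((MulAut.conj : ↥P →* MulAut ↥P).range).Normal := by
    constructor
    intro n hn g
    obtain ⟨x, rfl⟩ := hn
    refine ⟨g x, ?_⟩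
    ext y
    simp [MulAut.conj_apply, MulAut.inv_def, mul_assoc]
  exact h.subgroupOf _

/-- `Out_F(P) = Aut_F(P)/Inn(P)`. -/
def OutF (F : FusionSystem S) (P : Subgroup S) : Type _ :=
  ↥(F.AutF P) ⧸ ((MulAut.conj : ↥P →* MulAut ↥P).range.subgroupOf (F.AutF P))

noncomputable instance (F : FusionSystem S) (P : Subgroup S) : Group (OutF F P) :=
  letI := innRange_subgroupOf_normal F P
  QuotientGroup.Quotient.group _

/-- A strongly `p`-embedded subgroup: a proper subgroup `H < Γ` such that `p` divides
`|H|` and `p` does not divide `|H ∩ gHg⁻¹|` for every `g ∉ H`. -/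
def IsStronglyPEmbedded (p : ℕ) {Γ : Type*} [Group Γ] (H : Subgroup Γ) : Prop :=
  H ≠ ⊤ ∧ p ∣ Nat.card ↥H ∧
    ∀ g : Γ, g ∉ H → ¬ p ∣ Nat.card ↥(H ⊓ H.map (MulAut.conj g).toMonoidHom)

/-- `R` is `F`-essential: `R` is fully normalized, `F`-centric, and `Out_F(R)`
contains a strongly `p`-embedded subgroup. -/
def IsEssential (p : ℕ) (F : FusionSystem S) (R : Subgroup S) : Prop :=
  F.FullyNormalized R ∧ F.Centric R ∧
    ∃ H : Subgroup (OutF F R), IsStronglyPEmbedded p H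

/-- The Burnside ring `B(F)` of a fusion system: the subring of `B(S)` of elements
whose marks agree on `F`-conjugate subgroups. -/
noncomputable def FusionSystem.burnside (F : FusionSystem S) : Subring (Subgroup S → ℤ) where
  carrier := {b | b ∈ burnsideRing S ∧ ∀ P Q : Subgroup S, F.SubConj P Q → b P = b Q}
  zero_mem' := ⟨zero_mem _, fun _ _ _ => rfl⟩
  one_mem' := ⟨one_mem _, fun _ _ _ => rfl⟩
  add_mem' := fun ha hb => ⟨add_mem ha.1 hb.1, fun P Q h => by
    simp only [Pi.add_apply, ha.2 P Q h, hb.2 P Q h]⟩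
  mul_mem' := fun ha hb => ⟨mul_mem ha.1 hb.1, fun P Q h => by
    simp only [Pi.mul_apply, ha.2 P Q h, hb.2 P Q h]⟩
  neg_mem' := fun ha => ⟨neg_mem ha.1, fun P Q h => by
    simp only [Pi.neg_apply, ha.2 P Q h]⟩

/-- The unit group `B(F)^×` of the Burnside ring of a fusion system, as a set. -/
noncomputable def FusionSystem.burnsideUnits (F : FusionSystem S) : Set (Subgroup S → ℤ) :=
  {b | b ∈ F.burnside ∧ b * b = 1}

/-- `F`-conjugacy as an equivalence relation on the subgroups of `S`. -/
def fconjSetoid (F : FusionSystem S) : Setoid (Subgroup S) where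
  r := F.SubConj
  iseqv := by
    constructor
    · intro P
      refine ⟨conjMap 1 P P (fun x hx => by simpa using hx), F.conj_mem _ _ _ _, ?_⟩
      intro y; exact ⟨y, by ext; simp [conjMap]⟩
    · rintro P Q ⟨f, hf, hsurj⟩
      have hbij : Function.Bijective ⇑f := ⟨F.inj hf, hsurj⟩
      have he : (MulEquiv.ofBijective f hbij).toMonoidHom ∈ F.Hom P Q := by
        have : (MulEquiv.ofBijective f hbij).toMonoidHom = f := by ext x; rfl
        rwa [this]
      exact ⟨(MulEquiv.ofBijective f hbij).symm.toMonoidHom, F.isoinv_mem _ he,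
        (MulEquiv.ofBijective f hbij).symm.surjective⟩
    · rintro P Q R ⟨f, hf, hfs⟩ ⟨g, hg, hgs⟩
      exact ⟨g.comp f, F.comp_mem hf hg, hgs.comp hfs⟩

open Classical in
/-- The unit `v_M ∈ B(S)^×` attached to a maximal subgroup `M < S`:
its mark at `P` is `-1` if `P ≤ M` and `+1` otherwise. -/
noncomputable def vUnit (S : Type*) [Group S] (M : Subgroup S) : Subgroup S → ℤ :=
  fun P => if P ≤ M then -1 else 1

end BurnsideFusion

namespace BurnsideFusion

variable {G : Type*} [Group G]

/-- `S` is a Sylow `p`-subgroup of `G`. -/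
def IsSylow (p : ℕ) (S : Subgroup G) : Prop :=
  IsPGroup p ↥S ∧ ¬ p ∣ S.index

/-- `K` is a Sylow `p`-subgroup of `H` (both subgroups of an ambient group `G`). -/
def IsSylowIn (p : ℕ) (H K : Subgroup G) : Prop :=
  K ≤ H ∧ IsPGroup p ↥K ∧ ¬ p ∣ (K.subgroupOf H).index

/-- An element of the ghost ring of `S` has marks which agree on pairs of subgroups
of `S` that are conjugate by an element of `N ≤ G`.  For `N = ⊤` this is stability
for the Frobenius fusion system `F_S(G)`; for `N = N_G(S)` it is stability for
`F_S(N_G(S))`. -/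
def frobStable (S N : Subgroup G) (b : Subgroup ↥S → ℤ) : Prop :=
  ∀ P Q : Subgroup ↥S,
    (∃ g ∈ N, (P.map S.subtype).map (MulAut.conj g).toMonoidHom = Q.map S.subtype) →
    b P = b Q

/-- The Burnside ring `B(F_S(N))` of the fusion system on `S` induced by a subgroup
`N` of `G` containing `S`, as a subset of `B(S)`. -/
noncomputable def frobBurnside (S N : Subgroup G) : Set (Subgroup ↥S → ℤ) :=
  {b | b ∈ burnsideRing ↥S ∧ frobStable S N b}

/-- The unit group `B(F_S(N))^×`, as a set. -/
noncomputable def frobUnits (S N : Subgroup G) : Set (Subgroup ↥S → ℤ) :=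
  {b | b ∈ frobBurnside S N ∧ b * b = 1}

/-- Restriction `B(N) → B(S)` for `S ≤ N ≤ G`, on marks. -/
def resMark₂ (S N : Subgroup G) (b : Subgroup ↥N → ℤ) : Subgroup ↥S → ℤ :=
  fun P => b ((P.map S.subtype).subgroupOf N)

/-- Tensor induction `B(Ten^G_S) : B(S)^× → B(G)^×`, on marks: the mark of
`Ten^G_S b` at `H ≤ G` is the product over the double cosets `HgS` of the marks
`b_{(g⁻¹Hg ∩ S)}`. -/
noncomputable def tenInd (S : Subgroup G) (b : Subgroup ↥S → ℤ) : Subgroup G → ℤ :=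
  fun H => ∏ᶠ c : DoubleCoset.Quotient (H : Set G) (S : Set G),
    b ((H.comap (MulAut.conj (Quotient.out c)).toMonoidHom).subgroupOf S)

/-- `Aut_G(S)`: the automorphisms of `S ≤ G` induced by conjugation by elements
of `G` (as a set). -/
def autGSet (S : Subgroup G) : Set (MulAut ↥S) :=
  {α | ∃ g : G, ∀ x : ↥S, ((α x : ↥S) : G) = g * (x : G) * g⁻¹}

end BurnsideFusion

namespace BurnsideFusion



section Aux

variable {S : Type*} [Group S]

theorem mem_hom_of_coe_conj (F : FusionSystem S) {P Q : Subgroup S} (f : ↥P →* ↥Q)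
    (s : S) (hs : ∀ x : ↥P, ((f x : ↥Q) : S) = s * (x : S) * s⁻¹) : f ∈ F.Hom P Q := by
  have h : ∀ x ∈ P, s * x * s⁻¹ ∈ Q := fun x hx => hs ⟨x, hx⟩ ▸ (f ⟨x, hx⟩).2
  have hfc : f = conjMap s P Q h := by
    ext x
    exact hs x
  rw [hfc]; exact F.conj_mem s P Q h

theorem restrict_iso (F : FusionSystem S) {P Q : Subgroup S} {f : ↥P →* ↥Q}
    (hf : f ∈ F.Hom P Q) (x : ↥P) :
    ∃ e : ↥(Subgroup.zpowers (x : S)) ≃* ↥(Subgroup.zpowers ((f x : ↥Q) : S)),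
      e.toMonoidHom ∈ F.Hom (Subgroup.zpowers (x : S)) (Subgroup.zpowers ((f x : ↥Q) : S)) ∧
      ((e ⟨(x : S), Subgroup.mem_zpowers _⟩ : ↥(Subgroup.zpowers ((f x : ↥Q) : S))) : S)
        = ((f x : ↥Q) : S) := by
  have hle : Subgroup.zpowers (x : S) ≤ P := Subgroup.zpowers_le.mpr x.2
  have h1 : ∀ z ∈ Subgroup.zpowers (x : S), (1:S) * z * (1:S)⁻¹ ∈ P := fun z hz => by
    simpa using hle hz
  have hι : conjMap 1 (Subgroup.zpowers (x : S)) P h1 ∈ F.Hom (Subgroup.zpowers (x : S)) P :=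
    F.conj_mem _ _ _ _
  set ι := conjMap (1:S) (Subgroup.zpowers (x : S)) P h1 with hιdef
  have hιx : ι ⟨(x:S), Subgroup.mem_zpowers _⟩ = x := Subtype.ext (by simp [hιdef, conjMap])
  have hg : f.comp ι ∈ F.Hom (Subgroup.zpowers (x : S)) Q := F.comp_mem hι hf
  obtain ⟨R, hRQ, e, he, hcoe⟩ := F.factor_mem hg
  have hex : ((e ⟨(x:S), Subgroup.mem_zpowers _⟩ : ↥R) : S) = ((f x : ↥Q) : S) := by
    rw [hcoe]; simp [MonoidHom.comp_apply, hιx]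
  have hR : R = Subgroup.zpowers ((f x : ↥Q) : S) := by
    apply le_antisymm
    · intro r hr
      obtain ⟨z, hz⟩ := e.surjective ⟨r, hr⟩
      obtain ⟨n, hn⟩ := Subgroup.mem_zpowers_iff.mp z.2
      have hzn : z = (⟨(x:S), Subgroup.mem_zpowers _⟩ : ↥(Subgroup.zpowers (x:S))) ^ n :=
        Subtype.ext (by rw [← hn]; simp)
      have hr' : r = ((f x : ↥Q) : S) ^ n := by
        have h2 := congrArg (fun t : ↥R => (t : S)) hz
        simp only at h2
        rw [← h2, hzn, map_zpow]
        push_cast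
        rw [hex]
      exact Subgroup.mem_zpowers_iff.mpr ⟨n, hr'.symm⟩
    · exact Subgroup.zpowers_le.mpr (hex ▸ (e _).2)
  subst hR
  exact ⟨e, he, hex⟩

end Aux


section Ext

theorem mem_autFS_iff {S : Type*} [Group S] (F : FusionSystem S) (α : MulAut S) :
    α ∈ F.AutFS ↔ (topRestrict α).toMonoidHom ∈ F.Hom ⊤ ⊤ := Iff.rfl

/-- Inverse of `topRestrict`. -/
def toMulAutS {S : Type*} [Group S] (γ : MulAut ↥(⊤ : Subgroup S)) : MulAut S :=
  (Subgroup.topEquiv.symm.trans γ).trans Subgroup.topEquiv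

theorem topRestrict_toMulAutS {S : Type*} [Group S] (γ : MulAut ↥(⊤ : Subgroup S)) :
    topRestrict (toMulAutS γ) = γ := by
  ext x
  rfl

theorem toMulAutS_apply {S : Type*} [Group S] (γ : MulAut ↥(⊤ : Subgroup S)) (x : S) :
    toMulAutS γ x = ((γ ⟨x, Subgroup.mem_top x⟩ : ↥(⊤ : Subgroup S)) : S) := rfl

theorem conj_triv {S : Type*} [CommGroup S] (g h : S) : g * h * g⁻¹ = h := by
  rw [mul_comm g h, mul_assoc, mul_inv_cancel, mul_one]

theorem extend_receptive {S : Type*} [CommGroup S] [Finite S] (F : FusionSystem S)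
    {P' R : Subgroup S} (hrec : F.Receptive R) (ψ : ↥P' ≃* ↥R)
    (hψ : ψ.toMonoidHom ∈ F.Hom P' R) :
    ∃ α : MulAut S, α ∈ F.AutFS ∧ ∀ (x : S) (hx : x ∈ P'), α x = ((ψ ⟨x, hx⟩ : ↥R) : S) := by
  obtain ⟨T, hT, ψ', hψ', hext⟩ := hrec P' ψ hψ
  have hTtop : T = ⊤ := by
    apply Subgroup.ext
    intro g
    simp only [Subgroup.mem_top, iff_true]
    have hmem : g ∈ (T : Set S) := by
      rw [hT]
      have hg : g ∈ Subgroup.normalizer (P' : Set S) := by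
        rw [Subgroup.mem_normalizer_iff]
        intro h
        rw [conj_triv]
      refine ⟨hg, 1, fun x hx => ?_⟩
      have hxx : (⟨g * x * g⁻¹, (Subgroup.mem_normalizer_iff.mp hg x).mp hx⟩ : ↥P')
          = ⟨x, hx⟩ := Subtype.ext (conj_triv g x)
      rw [hxx]
      simp
    exact hmem
  subst hTtop
  have hbij : Function.Bijective ⇑ψ' := Finite.injective_iff_bijective.mp (F.inj hψ')
  set Ψ₀ : MulAut ↥(⊤ : Subgroup S) := MulEquiv.ofBijective ψ' hbij with hΨ₀
  have hΨ₀hom : Ψ₀.toMonoidHom = ψ' := by ext x; rfl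
  refine ⟨toMulAutS Ψ₀, ?_, ?_⟩
  · rw [mem_autFS_iff, topRestrict_toMulAutS, hΨ₀hom]
    exact hψ'
  · intro x hx
    rw [toMulAutS_apply]
    have : Ψ₀ ⟨x, Subgroup.mem_top x⟩ = ψ' ⟨x, Subgroup.mem_top x⟩ := rfl
    rw [this]
    exact hext x hx (Subgroup.mem_top x)

theorem subConj_iso {S : Type*} [Group S] (F : FusionSystem S) {Q R : Subgroup S}
    (h : F.SubConj Q R) : ∃ χ : ↥Q ≃* ↥R, χ.toMonoidHom ∈ F.Hom Q R := by
  obtain ⟨g, hg, hgs⟩ := h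
  have hbij : Function.Bijective ⇑g := ⟨F.inj hg, hgs⟩
  refine ⟨MulEquiv.ofBijective g hbij, ?_⟩
  have : (MulEquiv.ofBijective g hbij).toMonoidHom = g := by ext x; rfl
  rwa [this]

theorem exists_autFS_extend {S : Type*} [CommGroup S] [Finite S] (F : FusionSystem S)
    (hF : F.IsSaturated 2) {P Q : Subgroup S} (φ : ↥P ≃* ↥Q)
    (hφ : φ.toMonoidHom ∈ F.Hom P Q) :
    ∃ α : MulAut S, α ∈ F.AutFS ∧ ∀ x : ↥P, α (x : S) = ((φ x : ↥Q) : S) := by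
  obtain ⟨R, hQR, _, hrec⟩ := hF Q
  obtain ⟨χ, hχ⟩ := subConj_iso F hQR
  have hφχ : (φ.trans χ).toMonoidHom ∈ F.Hom P R := by
    have : (φ.trans χ).toMonoidHom = χ.toMonoidHom.comp φ.toMonoidHom := by ext x; rfl
    rw [this]
    exact F.comp_mem hφ hχ
  obtain ⟨Ψ, hΨmem, hΨ⟩ := extend_receptive F hrec (φ.trans χ) hφχ
  obtain ⟨Θ, hΘmem, hΘ⟩ := extend_receptive F hrec χ hχ
  refine ⟨Θ⁻¹ * Ψ, mul_mem (inv_mem hΘmem) hΨmem, fun x => ?_⟩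
  have h1 : Ψ (x : S) = ((χ (φ x) : ↥R) : S) := by
    rw [hΨ (x : S) x.2]
    rfl
  have h2 : Θ ((φ x : ↥Q) : S) = ((χ (φ x) : ↥R) : S) := by
    rw [hΘ _ (φ x).2]
  have : (Θ⁻¹ * Ψ) (x : S) = Θ⁻¹ (Ψ (x : S)) := rfl
  rw [this, h1, ← h2, MulAut.inv_def, MulEquiv.symm_apply_apply]

end Ext


section Odd

/-- An automorphism of odd order of a finite abelian 2-group which is trivial
modulo squares is trivial. -/
theorem odd_aut_trivial_of_mod_squares {S : Type*} [CommGroup S] [Finite S]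
    (hS : IsPGroup 2 S) (α : MulAut S) (n : ℕ) (hn : Odd n) (hα : α ^ n = 1)
    (h2 : ∀ u : S, ∃ t : S, α u = u * t ^ 2) : α = 1 := by
  haveI : Fact (Nat.Prime 2) := ⟨Nat.prime_two⟩
  obtain ⟨e, he⟩ := IsPGroup.iff_card.mp hS
  have hexp : ∀ s : S, s ^ 2 ^ e = 1 := fun s => by
    rw [← he]; exact pow_card_eq_one'
  have key : ∀ k : ℕ, ∀ s : S, ∃ t : S, (α ^ 2 ^ k) s = s * t ^ 2 ^ (k + 1) := by
    intro k
    induction k with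
    | zero =>
      intro s
      obtain ⟨t, ht⟩ := h2 s
      exact ⟨t, by simpa using ht⟩
    | succ k ih =>
      intro s
      obtain ⟨t, ht⟩ := ih s
      obtain ⟨r, hr⟩ := ih t
      refine ⟨t * r ^ 2 ^ k, ?_⟩
      have hsq : α ^ 2 ^ (k + 1) = (α ^ 2 ^ k) * (α ^ 2 ^ k) := by
        rw [pow_succ, pow_mul, sq]
      set β := α ^ 2 ^ k with hβ
      have happ : (α ^ 2 ^ (k + 1)) s = β (β s) := by rw [hsq]; rfl
      rw [happ, ht, map_mul, map_pow, ht, hr]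
      rw [mul_pow t (r ^ 2 ^ (k + 1)), ← pow_mul, mul_pow t (r ^ 2 ^ k), ← pow_mul]
      have hC : 2 ^ (k + 1) * 2 ^ (k + 1) = 2 ^ k * 2 ^ (k + 2) := by
        rw [pow_succ, pow_succ, pow_succ]; ring
      have hD : 2 ^ (k + 1) + 2 ^ (k + 1) = 2 ^ (k + 2) := by
        rw [pow_succ, pow_succ]; ring
      rw [hC, ← hD]
      simp [pow_add, mul_assoc]
  have h2e : α ^ 2 ^ e = 1 := by
    ext s
    obtain ⟨t, ht⟩ := key e s
    have : t ^ 2 ^ (e + 1) = 1 := by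
      rw [pow_succ, mul_comm, pow_mul]
      exact hexp (t ^ 2)
    rw [ht, this, mul_one]
    rfl
  have hd1 : orderOf α ∣ 2 ^ e := orderOf_dvd_of_pow_eq_one h2e
  have hd2 : orderOf α ∣ n := orderOf_dvd_of_pow_eq_one hα
  have hcop : Nat.Coprime (2 ^ e) n :=
    Nat.Coprime.pow_left e ((Nat.prime_two.coprime_iff_not_dvd).mpr
      (fun h => by have := Nat.odd_iff.mp hn; omega))
  exact orderOf_eq_one_iff.mp ((Nat.Coprime.coprime_dvd_left hd1 hcop).eq_one_of_dvd hd2)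

/-- The equivalence between `Aut_F(S)` (as automorphisms of `S`) and `Aut_F(⊤)`. -/
theorem card_autFS_eq {S : Type*} [Group S] (F : FusionSystem S) :
    Nat.card ↥F.AutFS = Nat.card ↥(F.AutF ⊤) := by
  have hmem : ∀ γ : ↥(F.AutF ⊤), toMulAutS (↑γ) ∈ F.AutFS := fun γ => by
    rw [mem_autFS_iff, topRestrict_toMulAutS]; exact γ.2
  refine Nat.card_congr ⟨fun α => ⟨topRestrict ↑α, α.2⟩, fun γ => ⟨toMulAutS ↑γ, hmem γ⟩,
    fun α => ?_, fun γ => ?_⟩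
  · apply Subtype.ext
    exact MulEquiv.ext fun s => rfl
  · apply Subtype.ext
    exact topRestrict_toMulAutS (S := S) ↑γ

theorem autS_top_eq_bot {S : Type*} [CommGroup S] : AutS (⊤ : Subgroup S) = ⊥ := by
  rw [eq_bot_iff]
  intro γ hγ
  obtain ⟨s, rfl⟩ := (MonoidHom.mem_range (f := conjAutHom (⊤ : Subgroup S))).mp hγ
  rw [Subgroup.mem_bot]
  exact MulEquiv.ext fun x => Subtype.ext (conj_triv (s : S) (x : S))

theorem autFS_card_odd {S : Type*} [CommGroup S] [Finite S] (F : FusionSystem S)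
    (hF : F.IsSaturated 2) : ¬ 2 ∣ Nat.card ↥F.AutFS := by
  obtain ⟨Q, hconj, hfa, _⟩ := hF ⊤
  have hQtop : Q = ⊤ := by
    obtain ⟨χ, _⟩ := subConj_iso F hconj
    apply Subgroup.eq_top_of_card_eq
    rw [← Nat.card_congr χ.toEquiv, Subgroup.card_top]
  subst hQtop
  obtain ⟨_, _, hind⟩ := hfa
  rw [autS_top_eq_bot, Subgroup.bot_subgroupOf, Subgroup.index_bot] at hind
  rwa [card_autFS_eq]

end Odd


section Sep

theorem exists_index_two {S : Type*} [CommGroup S] [Finite S] {v : S}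
    (hv : v ∉ (powMonoidHom 2 : S →* S).range) :
    ∃ M : Subgroup S, M.index = 2 ∧ v ∉ M := by
  haveI : Fact (Nat.Prime 2) := ⟨Nat.prime_two⟩
  set Sq := (powMonoidHom 2 : S →* S).range with hSqdef
  set V := S ⧸ Sq with hVdef
  set π := QuotientGroup.mk' Sq with hπdef
  have hker : ∀ s : S, π s = 1 ↔ s ∈ Sq := fun s => by
    rw [← MonoidHom.mem_ker, QuotientGroup.ker_mk']
  have hV2 : ∀ x : V, x ^ 2 = 1 := by
    intro x
    obtain ⟨g, rfl⟩ := QuotientGroup.mk'_surjective Sq x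
    rw [← map_pow]
    exact (hker _).mpr ⟨g, rfl⟩
  have h2 : ∀ a : Additive V, (2 : ℕ) • a = 0 := by
    intro a
    rw [two_smul]
    show Additive.ofMul (Additive.toMul a * Additive.toMul a) = Additive.ofMul 1
    exact congrArg Additive.ofMul (by rw [← sq]; exact hV2 (Additive.toMul a))
  letI : Module (ZMod 2) (Additive V) := AddCommGroup.zmodModule h2
  have hv1 : π v ≠ 1 := fun h => hv ((hker v).mp h)
  have hv0 : Additive.ofMul (π v) ≠ 0 := fun h => hv1 (congrArg Additive.toMul h)
  have hφ : ∃ φ : Module.Dual (ZMod 2) (Additive V), φ (Additive.ofMul (π v)) ≠ 0 := by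
    by_contra hcon
    push_neg at hcon
    exact hv0 ((Module.forall_dual_apply_eq_zero_iff (ZMod 2) _).mp hcon)
  obtain ⟨φ, hφ⟩ := hφ
  set χV : V →* Multiplicative (ZMod 2) := AddMonoidHom.toMultiplicativeRight φ.toAddMonoidHom
    with hχVdef
  set χ : S →* Multiplicative (ZMod 2) := χV.comp π with hχdef
  have hχv : Multiplicative.toAdd (χ v) ≠ 0 := hφ
  have h01 : ∀ x : ZMod 2, x = 0 ∨ x = 1 := by
    intro x
    fin_cases x
    · exact Or.inl rfl
    · exact Or.inr rfl
  have hsurj : Function.Surjective ⇑χ := by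
    intro y
    rcases h01 (Multiplicative.toAdd y) with h | h
    · refine ⟨1, ?_⟩
      rw [map_one]
      exact (Multiplicative.toAdd.injective (by rw [h]; rfl)).symm
    · refine ⟨v, ?_⟩
      rcases h01 (Multiplicative.toAdd (χ v)) with h' | h'
      · exact absurd h' hχv
      · exact Multiplicative.toAdd.injective (by rw [h, h'])
  refine ⟨χ.ker, ?_, fun hm => hχv (by rw [MonoidHom.mem_ker.mp hm]; rfl)⟩
  rw [Subgroup.index_ker, MonoidHom.range_eq_top.mpr hsurj, Subgroup.card_top,
    Nat.card_congr Multiplicative.toAdd, Nat.card_zmod]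

theorem smul_eq_iff_mem {S : Type*} [CommGroup S] (M : Subgroup S) (h : S) (x : S ⧸ M) :
    h • x = x ↔ h ∈ M := by
  obtain ⟨g, rfl⟩ := QuotientGroup.mk_surjective x
  show ((h * g : S) : S ⧸ M) = (g : S ⧸ M) ↔ h ∈ M
  rw [QuotientGroup.eq]
  have hc : (h * g)⁻¹ * g = h⁻¹ := by
    rw [mul_inv_rev, mul_assoc, mul_comm h⁻¹ g, ← mul_assoc, inv_mul_cancel, one_mul]
  rw [hc, inv_mem_iff]

open Classical in
theorem markVector_apply {S : Type*} [CommGroup S] (M H : Subgroup S) :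
    markVector S M H = if H ≤ M then (M.index : ℤ) else 0 := by
  by_cases hHM : H ≤ M
  · rw [if_pos hHM]
    show (↑(Nat.card {x : S ⧸ M // ∀ h : S, h ∈ H → h • x = x}) : ℤ) = (M.index : ℤ)
    have hall : ∀ x : S ⧸ M, ∀ h : S, h ∈ H → h • x = x := fun x h hh =>
      (smul_eq_iff_mem M h x).mpr (hHM hh)
    rw [Nat.card_congr (Equiv.subtypeUnivEquiv hall), ← Subgroup.index_eq_card]
  · rw [if_neg hHM]
    obtain ⟨h0, hh0, hh0M⟩ := SetLike.not_le_iff_exists.mp hHM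
    show (↑(Nat.card {x : S ⧸ M // ∀ h : S, h ∈ H → h • x = x}) : ℤ) = 0
    haveI : IsEmpty {x : S ⧸ M // ∀ h : S, h ∈ H → h • x = x} :=
      ⟨fun ⟨x, hx⟩ => hh0M ((smul_eq_iff_mem M h0 x).mp (hx h0 hh0))⟩
    rw [Nat.card_of_isEmpty]
    rfl

open Classical in
theorem vunit_spec {S : Type*} [CommGroup S] (M : Subgroup S) (hM : M.index = 2) :
    (1 - markVector S M) ∈ burnsideUnits S ∧
      ∀ H : Subgroup S, (1 - markVector S M) H = if H ≤ M then -1 else 1 := by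
  have hval : ∀ H : Subgroup S, (1 - markVector S M) H = if H ≤ M then -1 else 1 := by
    intro H
    show (1 : Subgroup S → ℤ) H - markVector S M H = _
    rw [markVector_apply, hM, Pi.one_apply]
    by_cases h : H ≤ M
    · rw [if_pos h, if_pos h]; norm_num
    · rw [if_neg h, if_neg h]; norm_num
  refine ⟨⟨?_, ?_⟩, hval⟩
  · exact Subring.sub_mem _ (Subring.one_mem _) (Subring.subset_closure ⟨M, rfl⟩)
  · funext H
    show ((1 - markVector S M) H) * ((1 - markVector S M) H) = (1 : Subgroup S → ℤ) H
    rw [hval H, Pi.one_apply]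
    by_cases h : H ≤ M
    · rw [if_pos h]; norm_num
    · rw [if_neg h]; norm_num

end Sep

theorem statement19 {S : Type*} [CommGroup S] [Finite S] (hS : IsPGroup 2 S)
    (F : FusionSystem S) (hF : F.IsSaturated 2) :
    F.burnsideUnits = burnsideUnits S ↔
      ∀ (P Q : Subgroup S) (f : ↥P →* ↥Q),
        f ∈ F.Hom P Q ↔ ∃ s : S, ∀ x : ↥P, ((f x : ↥Q) : S) = s * (x : S) * s⁻¹ := by
  constructor
  · intro hEq P Q f
    constructor
    · intro hf
      refine ⟨1, fun x => ?_⟩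
      rw [one_mul, inv_one, mul_one]
      by_contra hne
      obtain ⟨e, he, hex⟩ := restrict_iso F hf x
      obtain ⟨α, hα, hαval⟩ := exists_autFS_extend F hF e he
      have hαx : α (x : S) = ((f x : ↥Q) : S) :=
        (hαval ⟨(x : S), Subgroup.mem_zpowers _⟩).trans hex
      have hα1 : α ≠ 1 := by
        intro h
        rw [h] at hαx
        exact hne ((MulAut.one_apply S (x : S)) ▸ hαx).symm
      set n := Nat.card ↥F.AutFS with hn
      have hodd : Odd n := by
        rcases Nat.even_or_odd n with hev | ho
        · exact absurd hev.two_dvd (autFS_card_odd F hF)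
        · exact ho
      have hαn : α ^ n = 1 := by
        have h2 : ((⟨α, hα⟩ : ↥F.AutFS) ^ n : ↥F.AutFS) = (1 : ↥F.AutFS) :=
          pow_card_eq_one'
        have h3 := congrArg (fun z : ↥F.AutFS => (z : MulAut S)) h2
        simpa using h3
      have hnontriv : ¬ ∀ u : S, ∃ t : S, α u = u * t ^ 2 :=
        fun hall => hα1 (odd_aut_trivial_of_mod_squares hS α n hodd hαn hall)
      push_neg at hnontriv
      obtain ⟨u, hu⟩ := hnontriv
      have hv : u⁻¹ * α u ∉ (powMonoidHom 2 : S →* S).range := by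
        rintro ⟨t, ht⟩
        apply hu t
        have hpm : (powMonoidHom 2 : S →* S) t = t ^ 2 := rfl
        rw [hpm] at ht
        rw [ht, ← mul_assoc, mul_inv_cancel, one_mul]
      obtain ⟨M, hM2, hvM⟩ := exists_index_two hv
      have hxor : ¬ (u ∈ M ↔ α u ∈ M) := fun h =>
        hvM ((Subgroup.mul_mem_iff_of_index_two hM2).mpr (by rw [inv_mem_iff]; exact h))
      have hsc : F.SubConj (Subgroup.zpowers u) (Subgroup.zpowers (α u)) := by
        obtain ⟨e', he', _⟩ :=
          restrict_iso F ((mem_autFS_iff F α).mp hα) ⟨u, Subgroup.mem_top u⟩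
        exact ⟨e'.toMonoidHom, he', e'.surjective⟩
      obtain ⟨hbu, hbval⟩ := vunit_spec M hM2
      have hbF : (1 - markVector S M) ∈ F.burnsideUnits := by rw [hEq]; exact hbu
      have hstab : ∀ P' Q' : Subgroup S, F.SubConj P' Q' →
          (1 - markVector S M) P' = (1 - markVector S M) Q' := by
        have h' : (1 - markVector S M) ∈ {b : Subgroup S → ℤ | b ∈ burnsideRing S ∧
            ∀ P' Q' : Subgroup S, F.SubConj P' Q' → b P' = b Q'} := hbF.1
        exact h'.2
      by_cases huM : u ∈ M
      · have hαuM : α u ∉ M := fun h => hxor ⟨fun _ => h, fun _ => huM⟩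
        have hcontr := hstab _ _ hsc
        rw [hbval, hbval, if_pos (Subgroup.zpowers_le.mpr huM),
          if_neg (fun hle => hαuM (hle (Subgroup.mem_zpowers _)))] at hcontr
        norm_num at hcontr
      · have hαuM : α u ∈ M := by
          by_contra h
          exact hxor ⟨fun hu' => (huM hu').elim, fun ha' => (h ha').elim⟩
        have hsc' : F.SubConj (Subgroup.zpowers (α u)) (Subgroup.zpowers u) :=
          (fconjSetoid F).iseqv.symm hsc
        have hcontr := hstab _ _ hsc'
        rw [hbval, hbval, if_pos (Subgroup.zpowers_le.mpr hαuM),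
          if_neg (fun hle => huM (hle (Subgroup.mem_zpowers _)))] at hcontr
        norm_num at hcontr
    · rintro ⟨s, hs⟩
      exact mem_hom_of_coe_conj F f s hs
  · intro hTriv
    have hPQ : ∀ P Q : Subgroup S, F.SubConj P Q → P = Q := by
      rintro P Q ⟨g, hg, hgs⟩
      obtain ⟨s, hs⟩ := (hTriv P Q g).mp hg
      have hfix : ∀ x : ↥P, ((g x : ↥Q) : S) = (x : S) := fun x => by
        rw [hs x, conj_triv]
      apply le_antisymm
      · intro x hx
        have h2 := (g ⟨x, hx⟩).2
        rwa [show ((g ⟨x, hx⟩ : ↥Q) : S) = x from hfix ⟨x, hx⟩] at h2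
      · intro q hq
        obtain ⟨p, hp⟩ := hgs ⟨q, hq⟩
        have h2 := hfix p
        rw [hp] at h2
        have h3 : q = (p : S) := h2
        rw [h3]
        exact p.2
    apply Set.eq_of_subset_of_subset
    · intro b hb
      have h1 : b ∈ {b : Subgroup S → ℤ | b ∈ burnsideRing S ∧
          ∀ P Q : Subgroup S, F.SubConj P Q → b P = b Q} := hb.1
      exact ⟨h1.1, hb.2⟩
    · intro b hb
      have hmemF : b ∈ F.burnside := by
        show b ∈ {b : Subgroup S → ℤ | b ∈ burnsideRing S ∧
          ∀ P Q : Subgroup S, F.SubConj P Q → b P = b Q}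
        exact ⟨hb.1, fun P Q h => by rw [hPQ P Q h]⟩
      exact ⟨hmemF, hb.2⟩

end BurnsideFusion
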